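/- Suppose D(q,p) + K_P is positive definite for every (q,p). If t ↦ (q(t), p(t)) is a differentiable solution on all of ℝ of the closed-loop system q̇ = M(q)⁻¹ p, ṗ = −∇_q H_d(q,p) − (D(q,p) + K_P) M(q)⁻¹ p, and if the function t ↦ H_d(q(t), p(t)) is constant, then (q(t), p(t)) = (q⋆, 0) for all t. -/

import Mathlib

open Matrix

/-- The `i`-th component of the gradient of a scalar function on `ℝⁿ`. -/
noncomputable def grad {n : ℕ} (f : (Fin n → ℝ) → ℝ) (x : Fin n → ℝ) : Fin n → ℝ :=
  fun i => fderiv ℝ f x (Pi.single i 1)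

/-- The desired (shaped) Hamiltonian
`H_d(q,p) = ½ pᵀ M(q)⁻¹ p + ½ (q−q⋆)ᵀ K_I (q−q⋆) + Σᵢ (kᵢ/μᵢ) ln cosh(μᵢ(qᵢ−q⋆ᵢ))`. -/
noncomputable def Hdes {n : ℕ} (M : (Fin n → ℝ) → Matrix (Fin n) (Fin n) ℝ)
    (KI : Matrix (Fin n) (Fin n) ℝ) (k μ qstar : Fin n → ℝ) (q p : Fin n → ℝ) : ℝ :=
  (1 / 2) * (p ⬝ᵥ ((M q)⁻¹ *ᵥ p)) + (1 / 2) * ((q - qstar) ⬝ᵥ (KI *ᵥ (q - qstar)))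
    + ∑ i, (k i / μ i) * Real.log (Real.cosh (μ i * (q i - qstar i)))

/-! ### Auxiliary lemmas -/

/-- The continuous linear map `w ↦ c ⬝ᵥ w`. -/
noncomputable def clmDot {n : ℕ} (c : Fin n → ℝ) : (Fin n → ℝ) →L[ℝ] ℝ :=
  ∑ i, c i • ContinuousLinearMap.proj i

lemma clmDot_apply {n : ℕ} (c w : Fin n → ℝ) : clmDot c w = c ⬝ᵥ w := by
  simp [clmDot, dotProduct]

section DiffHelpers

variable {E : Type*} [NormedAddCommGroup E] [NormedSpace ℝ E]

lemma diffAt_finset_prod {ι : Type*} {u : Finset ι} {g : ι → E → ℝ} {x : E}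
    (h : ∀ i ∈ u, DifferentiableAt ℝ (g i) x) :
    DifferentiableAt ℝ (fun y => ∏ i ∈ u, g i y) x := by
  classical
  exact (HasFDerivAt.finset_prod (fun i hi => (h i hi).hasFDerivAt)).differentiableAt

lemma diffAt_det {n : ℕ} {f : E → Matrix (Fin n) (Fin n) ℝ} {x : E}
    (hf : ∀ i j, DifferentiableAt ℝ (fun y => f y i j) x) :
    DifferentiableAt ℝ (fun y => (f y).det) x := by
  classical
  simp only [Matrix.det_apply']
  exact DifferentiableAt.fun_sum fun σ _ =>
    ((diffAt_finset_prod (fun i _ => hf (σ i) i)).const_mul _)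

lemma diffAt_inv_entry {n : ℕ} {f : E → Matrix (Fin n) (Fin n) ℝ} {x : E}
    (hf : ∀ i j, DifferentiableAt ℝ (fun y => f y i j) x)
    (hdet : (f x).det ≠ 0) (i j : Fin n) :
    DifferentiableAt ℝ (fun y => (f y)⁻¹ i j) x := by
  classical
  have h1 : (fun y => (f y)⁻¹ i j)
      = fun y => ((f y).det)⁻¹ * ((f y).updateRow j (Pi.single i 1)).det := by
    funext y
    rw [Matrix.inv_def]
    simp [Ring.inverse_eq_inv', Matrix.adjugate_apply]
  rw [h1]
  refine ((diffAt_det hf).inv hdet).mul (diffAt_det ?_)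
  intro a b
  rcases eq_or_ne a j with rfl | hne
  · simp only [Matrix.updateRow_apply, if_pos rfl]
    exact differentiableAt_const _
  · simp only [Matrix.updateRow_apply, if_neg hne]
    exact hf a b

end DiffHelpers

lemma hasFDerivAt_quadForm {n : ℕ} (A : Matrix (Fin n) (Fin n) ℝ) (b : Fin n → ℝ) :
    HasFDerivAt (fun y : Fin n → ℝ => y ⬝ᵥ A *ᵥ y) (clmDot (A *ᵥ b + Aᵀ *ᵥ b)) b := by
  classical
  have h : HasFDerivAt (fun y : Fin n → ℝ => ∑ i, ∑ j, y i * (A i j * y j))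
      (∑ i, ∑ j, (b i • (A i j • ContinuousLinearMap.proj j)
        + (A i j * b j) • (ContinuousLinearMap.proj i : (Fin n → ℝ) →L[ℝ] ℝ))) b := by
    apply HasFDerivAt.fun_sum
    intro i _
    apply HasFDerivAt.fun_sum
    intro j _
    exact (hasFDerivAt_apply i b).mul ((hasFDerivAt_apply j b).const_mul (A i j))
  have heq : (fun y : Fin n → ℝ => y ⬝ᵥ A *ᵥ y)
      = fun y => ∑ i, ∑ j, y i * (A i j * y j) := by
    funext y
    simp [dotProduct, Matrix.mulVec, Finset.mul_sum]
  rw [heq]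
  refine h.congr_fderiv ?_
  ext w
  simp only [ContinuousLinearMap.coe_sum', Finset.sum_apply, ContinuousLinearMap.add_apply,
    ContinuousLinearMap.coe_smul', Pi.smul_apply, ContinuousLinearMap.proj_apply,
    smul_eq_mul, clmDot_apply, add_dotProduct, dotProduct, Pi.add_apply,
    Matrix.mulVec, Matrix.transpose_apply]
  have e1 : ∀ i, ∑ j, (b i * (A i j * w j) + A i j * b j * w i)
      = (∑ j, b i * (A i j * w j)) + ∑ j, A i j * b j * w i := fun i =>
    Finset.sum_add_distrib
  rw [Finset.sum_congr rfl fun i _ => e1 i, Finset.sum_add_distrib]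
  have e2 : ∑ i, ∑ j, b i * (A i j * w j) = ∑ j, ∑ i, b i * (A i j * w j) :=
    Finset.sum_comm
  rw [e2]
  have r : ∀ x : Fin n, ((∑ y, A x y * b y) + ∑ y, A y x * b y) * w x
      = (∑ y, A x y * b y * w x) + ∑ y, b y * (A y x * w x) := by
    intro x
    rw [add_mul, Finset.sum_mul, Finset.sum_mul]
    congr 1
    exact Finset.sum_congr rfl fun y _ => by ring
  rw [Finset.sum_congr rfl fun x _ => r x, Finset.sum_add_distrib, add_comm]

lemma hasDerivAt_logcosh (s : ℝ) :
    HasDerivAt (fun u => Real.log (Real.cosh u)) (Real.sinh s / Real.cosh s) s := by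
  have h := (Real.hasDerivAt_log (Real.cosh_pos s).ne').comp s (Real.hasDerivAt_cosh s)
  simpa [Function.comp_def, div_eq_inv_mul] using h

lemma hasFDerivAt_potential {n : ℕ} (KI : Matrix (Fin n) (Fin n) ℝ) (hKI : KIᵀ = KI)
    (k μ qstar : Fin n → ℝ) (hμ : ∀ i, μ i ≠ 0) (a : Fin n → ℝ) :
    HasFDerivAt (fun x : Fin n → ℝ => (1 / 2) * ((x - qstar) ⬝ᵥ (KI *ᵥ (x - qstar)))
        + ∑ i, (k i / μ i) * Real.log (Real.cosh (μ i * (x i - qstar i))))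
      (clmDot (KI *ᵥ (a - qstar) + fun i => k i *
        (Real.sinh (μ i * (a i - qstar i)) / Real.cosh (μ i * (a i - qstar i))))) a := by
  classical
  have hinner : HasFDerivAt (fun x : Fin n → ℝ => x - qstar)
      (ContinuousLinearMap.id ℝ (Fin n → ℝ)) a := (hasFDerivAt_id a).sub_const qstar
  have h1 : HasFDerivAt (fun x : Fin n → ℝ => (x - qstar) ⬝ᵥ (KI *ᵥ (x - qstar)))
      (clmDot (KI *ᵥ (a - qstar) + KIᵀ *ᵥ (a - qstar))) a := by
    have := (hasFDerivAt_quadForm KI (a - qstar)).comp a hinner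
    rw [ContinuousLinearMap.comp_id] at this
    exact this
  have h2 : ∀ i : Fin n, HasFDerivAt
      (fun x : Fin n → ℝ => (k i / μ i) * Real.log (Real.cosh (μ i * (x i - qstar i))))
      ((k i / μ i) • ((Real.sinh (μ i * (a i - qstar i)) / Real.cosh (μ i * (a i - qstar i)))
        • (μ i • (ContinuousLinearMap.proj i : (Fin n → ℝ) →L[ℝ] ℝ)))) a := by
    intro i
    have hin : HasFDerivAt (fun x : Fin n → ℝ => μ i * (x i - qstar i))
        (μ i • (ContinuousLinearMap.proj i : (Fin n → ℝ) →L[ℝ] ℝ)) a :=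
      ((hasFDerivAt_apply i a).sub_const (qstar i)).const_mul (μ i)
    exact ((hasDerivAt_logcosh _).comp_hasFDerivAt a hin).const_mul _
  have htot := (h1.const_mul (1 / 2)).add (HasFDerivAt.fun_sum (fun i (_ : i ∈ Finset.univ) => h2 i))
  refine htot.congr_fderiv ?_
  ext w
  simp only [ContinuousLinearMap.add_apply, ContinuousLinearMap.coe_smul', Pi.smul_apply,
    ContinuousLinearMap.coe_sum', Finset.sum_apply, ContinuousLinearMap.proj_apply,
    smul_eq_mul, clmDot_apply, hKI]
  rw [add_dotProduct, add_dotProduct]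
  have hterm : ∀ x : Fin n, k x / μ x *
      (Real.sinh (μ x * (a x - qstar x)) / Real.cosh (μ x * (a x - qstar x)) * (μ x * w x))
      = k x * (Real.sinh (μ x * (a x - qstar x)) / Real.cosh (μ x * (a x - qstar x))) * w x := by
    intro x
    have hcne : Real.cosh (μ x * (a x - qstar x)) ≠ 0 := (Real.cosh_pos _).ne'
    field_simp [hμ x, hcne]
  rw [Finset.sum_congr rfl fun x _ => hterm x]
  have hdp : (fun i => k i * (Real.sinh (μ i * (a i - qstar i))
      / Real.cosh (μ i * (a i - qstar i)))) ⬝ᵥ w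
      = ∑ x, k x * (Real.sinh (μ x * (a x - qstar x)) / Real.cosh (μ x * (a x - qstar x))) * w x := by
    simp [dotProduct]
  rw [hdp]
  ring

/-- LaSalle invariance argument: if `D(q,p) + K_P ≻ 0` everywhere and
`t ↦ H_d(q(t),p(t))` is constant along a global differentiable solution of the closed loop
`q̇ = M(q)⁻¹ p`, `ṗ = −∇_q H_d − (D + K_P) M(q)⁻¹ p`, then `(q(t),p(t)) = (q⋆,0)` for all `t`. -/
theorem lasalle_invariant_set {n : ℕ} (hn : 1 ≤ n) (qstar : Fin n → ℝ)
    (M : (Fin n → ℝ) → Matrix (Fin n) (Fin n) ℝ)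
    (hM : ∀ i j, ContDiff ℝ 2 (fun q => M q i j))
    (hMpd : ∀ q, (M q).PosDef)
    (D : (Fin n → ℝ) → (Fin n → ℝ) → Matrix (Fin n) (Fin n) ℝ)
    (hD : ∀ q p, (D q p).PosSemidef)
    (KP KI : Matrix (Fin n) (Fin n) ℝ) (hKP : KP.PosDef) (hKI : KI.PosDef)
    (hDKP : ∀ q p, (D q p + KP).PosDef)
    (k μ : Fin n → ℝ) (hk : ∀ i, 0 < k i) (hμ : ∀ i, 0 < μ i)
    (q p : ℝ → Fin n → ℝ) (hq : Differentiable ℝ q) (hp : Differentiable ℝ p)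
    (hqdot : ∀ t, deriv q t = (M (q t))⁻¹ *ᵥ p t)
    (hpdot : ∀ t, deriv p t =
      -(grad (fun q' => Hdes M KI k μ qstar q' (p t)) (q t))
        - (D (q t) (p t) + KP) *ᵥ ((M (q t))⁻¹ *ᵥ p t))
    (hconst : ∀ t : ℝ, Hdes M KI k μ qstar (q t) (p t)
      = Hdes M KI k μ qstar (q 0) (p 0)) :
    ∀ t : ℝ, q t = qstar ∧ p t = 0 := by
  classical
  have hMinvsymm : ∀ x : Fin n → ℝ, ((M x)⁻¹)ᵀ = (M x)⁻¹ := by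
    intro x
    ext i j
    simpa using ((hMpd x).1.inv).apply i j
  have hKIsymm : KIᵀ = KI := by
    ext i j
    simpa using hKI.1.apply i j
  have hdet : ∀ x, (M x).det ≠ 0 := fun x => (hMpd x).det_pos.ne'
  have hMentry : ∀ (x : Fin n → ℝ) (i j : Fin n),
      DifferentiableAt ℝ (fun y : Fin n → ℝ => M y i j) x :=
    fun x i j => ((hM i j).differentiable (by norm_num)).differentiableAt
  -- Step 1 : p vanishes identically
  have hpzero : ∀ t, p t = 0 := by
    intro t
    have hexp : (fun z : (Fin n → ℝ) × (Fin n → ℝ) => Hdes M KI k μ qstar z.1 z.2)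
        = fun z => ((1 / 2) * ∑ i, z.2 i * ∑ j, (M z.1)⁻¹ i j * z.2 j
            + (1 / 2) * ∑ i, (z.1 i - qstar i) * ∑ j, KI i j * (z.1 j - qstar j))
            + ∑ i, (k i / μ i) * Real.log (Real.cosh (μ i * (z.1 i - qstar i))) := by
      funext z
      simp [Hdes, dotProduct, Matrix.mulVec]
    have hfst : ∀ i : Fin n, DifferentiableAt ℝ
        (fun z : (Fin n → ℝ) × (Fin n → ℝ) => z.1 i) (q t, p t) :=
      fun i => DifferentiableAt.fun_comp' (g := fun v : Fin n → ℝ => v i) (f := Prod.fst) (q t, p t) (differentiableAt_apply i (q t))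
        differentiableAt_fst
    have hsnd : ∀ i : Fin n, DifferentiableAt ℝ
        (fun z : (Fin n → ℝ) × (Fin n → ℝ) => z.2 i) (q t, p t) :=
      fun i => DifferentiableAt.fun_comp' (g := fun v : Fin n → ℝ => v i) (f := Prod.snd) (q t, p t) (differentiableAt_apply i (p t))
        differentiableAt_snd
    have hinvz : ∀ i j : Fin n, DifferentiableAt ℝ
        (fun z : (Fin n → ℝ) × (Fin n → ℝ) => (M z.1)⁻¹ i j) (q t, p t) := by
      intro i j
      exact diffAt_inv_entry (f := fun z : (Fin n → ℝ) × (Fin n → ℝ) => M z.1)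
        (fun i j => DifferentiableAt.fun_comp' (g := fun y : Fin n → ℝ => M y i j) (f := Prod.fst) (q t, p t) (hMentry (q t) i j)
          differentiableAt_fst) (hdet (q t)) i j
    have hFd : DifferentiableAt ℝ
        (fun z : (Fin n → ℝ) × (Fin n → ℝ) => Hdes M KI k μ qstar z.1 z.2) (q t, p t) := by
      rw [hexp]
      refine DifferentiableAt.add (DifferentiableAt.add ?_ ?_) ?_
      · exact (DifferentiableAt.fun_sum fun i _ => (hsnd i).mul
          (DifferentiableAt.fun_sum fun j _ => (hinvz i j).mul (hsnd j))).const_mul _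
      · exact (DifferentiableAt.fun_sum fun i _ => ((hfst i).sub_const _).mul
          (DifferentiableAt.fun_sum fun j _ => (((hfst j).sub_const _).const_mul _))).const_mul _
      · refine DifferentiableAt.fun_sum fun i _ => DifferentiableAt.const_mul ?_ _
        have hc : DifferentiableAt ℝ (fun z : (Fin n → ℝ) × (Fin n → ℝ) =>
            Real.cosh (μ i * (z.1 i - qstar i))) (q t, p t) :=
          DifferentiableAt.comp (𝕜 := ℝ) (g := Real.cosh)
            (f := fun z : (Fin n → ℝ) × (Fin n → ℝ) => μ i * (z.1 i - qstar i)) (q t, p t)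
            (Real.differentiable_cosh _) (((hfst i).sub_const _).const_mul _)
        exact DifferentiableAt.comp (𝕜 := ℝ) (g := Real.log)
          (f := fun z : (Fin n → ℝ) × (Fin n → ℝ) => Real.cosh (μ i * (z.1 i - qstar i)))
          (q t, p t) (Real.differentiableAt_log (Real.cosh_pos _).ne') hc
    have hF := hFd.hasFDerivAt
    have hu : HasDerivAt (fun s => (q s, p s)) (deriv q t, deriv p t) t :=
      HasDerivAt.prodMk ((hq t).hasDerivAt) ((hp t).hasDerivAt)
    have hh := hF.comp_hasDerivAt t hu
    have hzero : fderiv ℝ (fun z : (Fin n → ℝ) × (Fin n → ℝ) => Hdes M KI k μ qstar z.1 z.2)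
        (q t, p t) (deriv q t, deriv p t) = 0 := by
      have hcf : ((fun z : (Fin n → ℝ) × (Fin n → ℝ) => Hdes M KI k μ qstar z.1 z.2)
          ∘ fun s => (q s, p s)) = fun _ => Hdes M KI k μ qstar (q 0) (p 0) :=
        funext fun s => hconst s
      rw [hcf] at hh
      exact hh.unique (hasDerivAt_const t _)
    set L := fderiv ℝ (fun z : (Fin n → ℝ) × (Fin n → ℝ) => Hdes M KI k μ qstar z.1 z.2)
      (q t, p t) with hLdef
    -- partial derivative in p
    have hgp : HasFDerivAt ((fun z : (Fin n → ℝ) × (Fin n → ℝ) => Hdes M KI k μ qstar z.1 z.2)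
        ∘ fun y : Fin n → ℝ => (q t, y))
        (L.comp ((0 : (Fin n → ℝ) →L[ℝ] (Fin n → ℝ)).prod (ContinuousLinearMap.id ℝ _))) (p t) :=
      hF.comp (p t) (HasFDerivAt.prodMk (hasFDerivAt_const (q t) (p t)) (hasFDerivAt_id (p t)))
    have hgp2 : HasFDerivAt (fun y : Fin n → ℝ => Hdes M KI k μ qstar (q t) y)
        (clmDot ((M (q t))⁻¹ *ᵥ p t)) (p t) := by
      have hb := (((hasFDerivAt_quadForm (M (q t))⁻¹ (p t)).const_mul (1 / 2)).add_const
          ((1 / 2) * ((q t - qstar) ⬝ᵥ (KI *ᵥ (q t - qstar))))).add_const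
          (∑ i, (k i / μ i) * Real.log (Real.cosh (μ i * (q t i - qstar i))))
      have hb3 : HasFDerivAt (fun y : Fin n → ℝ => Hdes M KI k μ qstar (q t) y)
          ((1 / 2 : ℝ) • clmDot ((M (q t))⁻¹ *ᵥ p t + ((M (q t))⁻¹)ᵀ *ᵥ p t)) (p t) := hb
      refine hb3.congr_fderiv ?_
      rw [hMinvsymm (q t)]
      ext w
      simp only [ContinuousLinearMap.coe_smul', Pi.smul_apply, smul_eq_mul, clmDot_apply,
        add_dotProduct]
      ring
    have hgpEq : L.comp ((0 : (Fin n → ℝ) →L[ℝ] (Fin n → ℝ)).prod (ContinuousLinearMap.id ℝ _))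
        = clmDot ((M (q t))⁻¹ *ᵥ p t) := hgp.unique hgp2
    have hLp : ∀ w, L (0, w) = ((M (q t))⁻¹ *ᵥ p t) ⬝ᵥ w := by
      intro w
      have h1 : L (0, w) = (L.comp ((0 : (Fin n → ℝ) →L[ℝ] (Fin n → ℝ)).prod
          (ContinuousLinearMap.id ℝ _))) w := by
        simp
      rw [h1, hgpEq, clmDot_apply]
    -- partial derivative in q, expressed via `grad`
    have hgq : HasFDerivAt ((fun z : (Fin n → ℝ) × (Fin n → ℝ) => Hdes M KI k μ qstar z.1 z.2)
        ∘ fun x : Fin n → ℝ => (x, p t))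
        (L.comp ((ContinuousLinearMap.id ℝ (Fin n → ℝ)).prod 0)) (q t) :=
      hF.comp (q t) (HasFDerivAt.prodMk (hasFDerivAt_id (q t)) (hasFDerivAt_const (p t) (q t)))
    have hgrad : ∀ i, grad (fun q' => Hdes M KI k μ qstar q' (p t)) (q t) i
        = L (Pi.single i 1, 0) := by
      intro i
      have hfd : fderiv ℝ (fun q' => Hdes M KI k μ qstar q' (p t)) (q t)
          = L.comp ((ContinuousLinearMap.id ℝ (Fin n → ℝ)).prod 0) := hgq.fderiv
      simp only [grad]
      rw [hfd]
      simp
    have hLq : L (deriv q t, 0)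
        = (deriv q t) ⬝ᵥ grad (fun q' => Hdes M KI k μ qstar q' (p t)) (q t) := by
      have hdecomp : ((deriv q t, 0) : (Fin n → ℝ) × (Fin n → ℝ))
          = ∑ i, (deriv q t i) • ((Pi.single i 1 : Fin n → ℝ), (0 : Fin n → ℝ)) := by
        ext j
        · simp [Prod.fst_sum, ← Pi.single_smul, smul_eq_mul, Finset.univ_sum_single]
        · simp [Prod.snd_sum]
      rw [hdecomp, map_sum]
      rw [dotProduct]
      refine Finset.sum_congr rfl fun i _ => ?_
      rw [_root_.map_smul, hgrad i, smul_eq_mul]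
    have hsplit : L (deriv q t, deriv p t) = L (deriv q t, 0) + L (0, deriv p t) := by
      rw [← map_add]
      congr 1
      simp
    have hkey : ((M (q t))⁻¹ *ᵥ p t) ⬝ᵥ ((D (q t) (p t) + KP) *ᵥ ((M (q t))⁻¹ *ᵥ p t)) = 0 := by
      have h0 := hzero
      rw [hsplit, hLq, hLp (deriv p t), hqdot t, hpdot t] at h0
      rw [dotProduct_sub, dotProduct_neg] at h0
      linarith
    have hApt : (M (q t))⁻¹ *ᵥ p t = 0 := by
      by_contra hne
      have hpos := (hDKP (q t) (p t)).dotProduct_mulVec_pos hne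
      rw [star_trivial] at hpos
      rw [hkey] at hpos
      exact lt_irrefl _ hpos
    have := congrArg (fun w => M (q t) *ᵥ w) hApt
    simpa [Matrix.mulVec_mulVec, Matrix.mul_nonsing_inv _ (isUnit_iff_ne_zero.mpr (hdet (q t))),
      Matrix.one_mulVec, Matrix.mulVec_zero] using this
  -- Step 2 : q t = qstar
  intro t
  refine ⟨?_, hpzero t⟩
  have hpconst : p = fun _ => (0 : Fin n → ℝ) := funext hpzero
  have hpderiv : deriv p t = 0 := by rw [hpconst]; exact deriv_const t _
  have h0 := hpdot t
  rw [hpderiv, hpzero t] at h0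
  simp only [Matrix.mulVec_zero, sub_zero] at h0
  have hgrad0 : grad (fun q' => Hdes M KI k μ qstar q' 0) (q t) = 0 := neg_eq_zero.mp h0.symm
  have hfun : (fun q' => Hdes M KI k μ qstar q' 0)
      = fun x => (1 / 2) * ((x - qstar) ⬝ᵥ (KI *ᵥ (x - qstar)))
        + ∑ i, (k i / μ i) * Real.log (Real.cosh (μ i * (x i - qstar i))) := by
    funext x
    simp [Hdes]
  rw [hfun] at hgrad0
  have hV := hasFDerivAt_potential KI hKIsymm k μ qstar (fun i => (hμ i).ne') (q t)
  have hcomp : ∀ i, (KI *ᵥ (q t - qstar) + fun i' => k i' *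
      (Real.sinh (μ i' * (q t i' - qstar i')) / Real.cosh (μ i' * (q t i' - qstar i')))) i = 0 := by
    intro i
    have hgi : grad (fun x => (1 / 2) * ((x - qstar) ⬝ᵥ (KI *ᵥ (x - qstar)))
        + ∑ i, (k i / μ i) * Real.log (Real.cosh (μ i * (x i - qstar i)))) (q t) i
        = (KI *ᵥ (q t - qstar) + fun i' => k i' *
          (Real.sinh (μ i' * (q t i' - qstar i')) / Real.cosh (μ i' * (q t i' - qstar i')))) i := by
      simp only [grad]
      rw [hV.fderiv, clmDot_apply, dotProduct_single, mul_one]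
    rw [← hgi, hgrad0]
    rfl
  have hceq : (KI *ᵥ (q t - qstar) + fun i' => k i' *
      (Real.sinh (μ i' * (q t i' - qstar i')) / Real.cosh (μ i' * (q t i' - qstar i'))))
      = 0 := funext hcomp
  have hdot : (q t - qstar) ⬝ᵥ (KI *ᵥ (q t - qstar) + fun i' => k i' *
      (Real.sinh (μ i' * (q t i' - qstar i')) / Real.cosh (μ i' * (q t i' - qstar i')))) = 0 := by
    rw [hceq, dotProduct_zero]
  rw [dotProduct_add] at hdot
  have hs : 0 ≤ (q t - qstar) ⬝ᵥ (fun i' => k i' *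
      (Real.sinh (μ i' * (q t i' - qstar i')) / Real.cosh (μ i' * (q t i' - qstar i')))) := by
    rw [dotProduct]
    refine Finset.sum_nonneg fun i _ => ?_
    have hyi : (q t - qstar) i = q t i - qstar i := rfl
    rw [hyi]
    set y := q t i - qstar i with hy
    rcases le_total 0 y with hy0 | hy0
    · have hsi : 0 ≤ Real.sinh (μ i * y) :=
        Real.sinh_nonneg_iff.mpr (mul_nonneg (hμ i).le hy0)
      exact mul_nonneg hy0 (mul_nonneg (hk i).le
        (div_nonneg hsi (Real.cosh_pos _).le))
    · have hsle : μ i * y ≤ 0 := mul_nonpos_of_nonneg_of_nonpos (hμ i).le hy0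
      have hsi : Real.sinh (μ i * y) ≤ 0 := by
        have := Real.sinh_le_sinh.mpr hsle
        simpa [Real.sinh_zero] using this
      have hr : Real.sinh (μ i * y) / Real.cosh (μ i * y) ≤ 0 :=
        div_nonpos_of_nonpos_of_nonneg hsi (Real.cosh_pos _).le
      have h1 : k i * (Real.sinh (μ i * y) / Real.cosh (μ i * y)) ≤ 0 :=
        mul_nonpos_of_nonneg_of_nonpos (hk i).le hr
      nlinarith
  rcases eq_or_ne (q t - qstar) 0 with h | h
  · exact sub_eq_zero.mp h
  · exfalso
    have hpos := hKI.dotProduct_mulVec_pos h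
    rw [star_trivial] at hpos
    nlinarith
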